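/- For every positive natural number m and every natural number n ≥ 2, the two-sided power sum satisfies ∑_{k=1}^{n−1} k^m (n−k)^m = n^{2m+1}/((2m+1)·C(2m,m)) − 2·(−1)^m · ∑_{k=0}^{m} C(m,k) · ζ(−m−k) · n^{m−k}, where ζ is the Riemann zeta function (evaluated at negative integers via analytic continuation). -/

import Mathlib

open Finset

lemma altH (m s : ℕ) :
    ∑ j ∈ range (m + 1), (-1 : ℚ) ^ j * (m.choose j) * (j.choose s)
      = if s = m then (-1 : ℚ) ^ m else 0 := by
  rcases le_or_gt s m with hs | hs
  · -- split the sum at s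
    rw [range_eq_Ico, ← Finset.sum_Ico_consecutive _ (Nat.zero_le s) (by omega : s ≤ m + 1)]
    have h1 : ∑ j ∈ Ico 0 s, (-1 : ℚ) ^ j * (m.choose j) * (j.choose s) = 0 := by
      apply Finset.sum_eq_zero
      intro j hj
      rw [mem_Ico] at hj
      rw [Nat.choose_eq_zero_of_lt hj.2]
      simp
    rw [h1, zero_add, Finset.sum_Ico_eq_sum_range]
    have h2 : m + 1 - s = (m - s) + 1 := by omega
    rw [h2]
    have h3 : ∀ k ∈ range (m - s + 1),
        (-1 : ℚ) ^ (s + k) * (m.choose (s + k)) * ((s + k).choose s)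
          = (-1 : ℚ) ^ s * (m.choose s) * ((-1 : ℚ) ^ k * ((m - s).choose k)) := by
      intro k hk
      rw [mem_range] at hk
      have hc : m.choose (s + k) * (s + k).choose s = m.choose s * (m - s).choose k := by
        have := Nat.choose_mul (n := m) (show s ≤ s + k by omega)
        simpa using this
      have hc' : (m.choose (s + k) : ℚ) * ((s + k).choose s) = (m.choose s : ℚ) * ((m - s).choose k) := by
        exact_mod_cast congrArg (fun x : ℕ => (x : ℚ)) hc
      rw [pow_add]
      linear_combination ((-1:ℚ)^s*(-1)^k) * hc'
    rw [Finset.sum_congr rfl h3, ← Finset.mul_sum]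
    have h4 : ∑ k ∈ range (m - s + 1), (-1 : ℚ) ^ k * (((m - s).choose k) : ℚ)
        = if m - s = 0 then 1 else 0 := by
      exact_mod_cast congrArg (fun x : ℤ => (x : ℚ)) (Int.alternating_sum_range_choose (n := m - s))
    rw [h4]
    rcases eq_or_lt_of_le hs with rfl | hlt
    · simp
    · rw [if_neg (by omega), if_neg (by omega)]
      ring
  · rw [if_neg (by omega)]
    apply Finset.sum_eq_zero
    intro j hj
    rw [mem_range] at hj
    rw [Nat.choose_eq_zero_of_lt (show j < s by omega)]
    simp

lemma altG (m r : ℕ) :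
    ∑ j ∈ range (m + 1), (-1 : ℚ) ^ j * (m.choose j) * ((m + j).choose r)
      = (-1 : ℚ) ^ m * (if m ≤ r then ((m.choose (r - m)) : ℚ) else 0) := by
  have hvdm : ∀ j : ℕ, (((m + j).choose r : ℕ) : ℚ)
      = ∑ s ∈ range (r + 1), (m.choose s : ℚ) * (j.choose (r - s)) := by
    intro j
    rw [Nat.add_choose_eq, Finset.Nat.sum_antidiagonal_eq_sum_range_succ_mk]
    push_cast
    rfl
  calc ∑ j ∈ range (m + 1), (-1 : ℚ) ^ j * (m.choose j) * ((m + j).choose r)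
      = ∑ j ∈ range (m + 1), ∑ s ∈ range (r + 1),
          (m.choose s : ℚ) * ((-1 : ℚ) ^ j * (m.choose j) * (j.choose (r - s))) := by
        refine Finset.sum_congr rfl fun j _ => ?_
        rw [hvdm j, Finset.mul_sum]
        refine Finset.sum_congr rfl fun s _ => ?_
        ring
    _ = ∑ s ∈ range (r + 1), (m.choose s : ℚ) *
          ∑ j ∈ range (m + 1), (-1 : ℚ) ^ j * (m.choose j) * (j.choose (r - s)) := by
        rw [Finset.sum_comm]
        exact Finset.sum_congr rfl fun s _ => (Finset.mul_sum _ _ _).symm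
    _ = ∑ s ∈ range (r + 1), (m.choose s : ℚ) * (if r - s = m then (-1 : ℚ) ^ m else 0) := by
        exact Finset.sum_congr rfl fun s _ => by rw [altH]
    _ = (-1 : ℚ) ^ m * (if m ≤ r then ((m.choose (r - m)) : ℚ) else 0) := by
        rcases le_or_gt m r with hmr | hmr
        · rw [if_pos hmr]
          rw [Finset.sum_eq_single (r - m)]
          · rw [if_pos (by omega)]; ring
          · intro s hs hne
            rw [mem_range] at hs
            rw [if_neg (by omega), mul_zero]
          · intro h
            exact absurd (mem_range.mpr (by omega)) h
        · rw [if_neg (by omega), mul_zero]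
          apply Finset.sum_eq_zero
          intro s hs
          rw [mem_range] at hs
          rw [if_neg (by omega), mul_zero]


lemma betaF : ∀ (b a : ℕ),
    ∑ j ∈ range (b + 1), (-1 : ℚ) ^ j * (b.choose j) / (a + j + 1)
      = 1 / ((a + b + 1) * ((a + b).choose b)) := by
  intro b
  induction b with
  | zero => intro a; simp
  | succ b ih =>
    intro a
    have hstep : ∑ j ∈ range (b + 1 + 1), (-1 : ℚ) ^ j * ((b+1).choose j) / (a + j + 1)
        = (∑ j ∈ range (b + 1), (-1 : ℚ) ^ j * (b.choose j) / (a + j + 1))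
          - ∑ j ∈ range (b + 1), (-1 : ℚ) ^ j * (b.choose j) / ((a+1) + j + 1) := by
      rw [Finset.sum_range_succ' (fun j => (-1 : ℚ) ^ j * ((b+1).choose j) / (a + j + 1)) (b+1)]
      have hpas : ∀ i ∈ range (b+1),
          (-1 : ℚ) ^ (i+1) * (((b+1).choose (i+1) : ℕ) : ℚ) / ((a : ℚ) + ((i+1 : ℕ) : ℚ) + 1)
            = -((-1 : ℚ) ^ i * (b.choose i) / (((a+1 : ℕ) : ℚ) + i + 1))
              - (-1 : ℚ) ^ i * ((b.choose (i+1) : ℕ) : ℚ) / ((a : ℚ) + ((i+1 : ℕ) : ℚ) + 1) := by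
        intro i _
        rw [Nat.choose_succ_succ]
        push_cast
        have hne : (a : ℚ) + (i+1) + 1 ≠ 0 := by positivity
        have hne2 : (a : ℚ) + 1 + i + 1 ≠ 0 := by positivity
        field_simp
        ring
      rw [Finset.sum_congr rfl hpas, Finset.sum_sub_distrib]
      have hT : ∑ i ∈ range (b+1),
            (-1 : ℚ) ^ i * ((b.choose (i+1) : ℕ) : ℚ) / ((a : ℚ) + ((i+1 : ℕ) : ℚ) + 1)
          = (1 : ℚ)/(a+1) - ∑ j ∈ range (b + 1), (-1 : ℚ) ^ j * (b.choose j) / (a + j + 1) := by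
        have h1 : ∀ i ∈ range b,
            (-1:ℚ)^(i+1) * ((b.choose (i+1) : ℕ):ℚ) / ((a:ℚ) + ((i+1:ℕ):ℚ) + 1)
              = -((-1:ℚ)^i * ((b.choose (i+1) : ℕ):ℚ) / ((a:ℚ) + ((i+1:ℕ):ℚ) + 1)) := by
          intro i _; ring
        rw [Finset.sum_range_succ' (fun j => (-1 : ℚ) ^ j * ((b).choose j) / (a + j + 1)) b,
            Finset.sum_congr rfl h1,
            Finset.sum_range_succ
              (fun i => (-1:ℚ)^i * ((b.choose (i+1) : ℕ):ℚ) / ((a:ℚ)+((i+1:ℕ):ℚ)+1)) b,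
            Nat.choose_succ_self, Nat.choose_zero_right]
        rw [Finset.sum_neg_distrib]
        push_cast
        ring
      rw [Finset.sum_neg_distrib, hT, Nat.choose_zero_right]
      push_cast
      norm_num
      ring
    rw [hstep, ih a]
    have ih2 := ih (a+1)
    push_cast at ih2 ⊢
    rw [ih2]
    -- numeric identity
    have e1' := Nat.add_one_mul_choose_eq (a+b) b
    have e1 : ((a:ℚ) + b + 1) * ((a+b).choose b) = ((b:ℚ)+1) * ((a+b+1).choose (b+1)) := by
      have h : (a+b+1) * ((a+b).choose b) = (b+1) * ((a+b+1).choose (b+1)) := by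
        simpa [Nat.succ_eq_add_one, Nat.mul_comm] using e1'
      exact_mod_cast h
    have e2 : ((b:ℚ)+1) * ((a+b+1).choose (b+1)) = ((a:ℚ)+1) * ((a+b+1).choose b) := by
      have h0 := Nat.choose_succ_right_eq (a+b+1) b
      have h' : (b+1) * ((a+b+1).choose (b+1)) = (a+1) * ((a+b+1).choose b) := by
        rw [Nat.mul_comm, h0, Nat.mul_comm]; congr 1; omega
      exact_mod_cast h'
    have p1 : (0:ℚ) < ((a+b).choose b : ℚ) := by exact_mod_cast Nat.choose_pos (by omega)
    have p2 : (0:ℚ) < ((a+b+1).choose b : ℚ) := by exact_mod_cast Nat.choose_pos (by omega)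
    have p3 : (0:ℚ) < ((a+b+1).choose (b+1) : ℚ) := by exact_mod_cast Nat.choose_pos (by omega)
    rw [show a + 1 + b = a + b + 1 by omega, show a + (b+1) = a + b + 1 by omega,
        show ((a:ℚ) + (↑b + 1) + 1) = ↑a + ↑b + 1 + 1 by ring,
        show ((a:ℚ) + 1 + ↑b + 1) = ↑a + ↑b + 1 + 1 by ring]
    have hA : ((a:ℚ) + ↑b + 1) ≠ 0 := by positivity
    have hA1 : ((a:ℚ) + ↑b + 1 + 1) ≠ 0 := by positivity
    have hb1 : ((b:ℚ) + 1) ≠ 0 := by positivity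
    have ha1 : ((a:ℚ) + 1) ≠ 0 := by positivity
    have g1 : (1:ℚ)/(((a:ℚ) + ↑b + 1) * ((a+b).choose b)) = 1/(((b:ℚ)+1) * ((a+b+1).choose (b+1))) := by
      rw [e1]
    have g2 : (1:ℚ)/((((a:ℚ) + ↑b + 1 + 1)) * ((a+b+1).choose b))
        = ((a:ℚ)+1)/((((a:ℚ) + ↑b + 1 + 1)) * (((b:ℚ)+1) * ((a+b+1).choose (b+1)))) := by
      rw [div_eq_div_iff (by positivity) (by positivity)]
      linear_combination ((a:ℚ) + ↑b + 1 + 1) * e2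
    rw [g1, g2]
    field_simp
    ring

lemma bern_zero {N : ℕ} (h : Even N) (hN : 1 ≤ N) : bernoulli (N + 1) = 0 := by
  rw [bernoulli_eq_bernoulli'_of_ne_one (by omega)]
  exact bernoulli'_eq_zero_of_odd (by simpa using h.add_one) (by omega)

lemma master (m n : ℕ) (hm : 0 < m) :
    ∑ k ∈ range n, (k : ℚ) ^ m * ((n : ℚ) - (k : ℚ)) ^ m
      = (n : ℚ) ^ (2 * m + 1) / ((2 * m + 1) * ((2 * m).choose m))
        - 2 * ∑ k ∈ range (m + 1),
            (m.choose k : ℚ) * ((-1) ^ k * bernoulli (m + k + 1) / ((m : ℚ) + k + 1))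
              * (n : ℚ) ^ (m - k) := by
  set G : ℕ → ℕ → ℚ := fun j i =>
    bernoulli i * (((m + j + 1).choose i : ℕ) : ℚ) * (n : ℚ) ^ (m + j + 1 - i)
      / ((m : ℚ) + (j : ℚ) + 1) with hG
  set c : ℕ → ℚ := fun j => (-1 : ℚ) ^ j * (m.choose j) * (n : ℚ) ^ (m - j) with hc
  -- Step 1: expand and apply Faulhaber
  have h2 : ∑ k ∈ range n, (k : ℚ) ^ m * ((n : ℚ) - (k : ℚ)) ^ m
      = ∑ j ∈ range (m + 1), c j * ∑ k ∈ range n, (k : ℚ) ^ (m + j) := by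
    have h1 : ∀ k ∈ range n, (k : ℚ) ^ m * ((n : ℚ) - (k : ℚ)) ^ m
        = ∑ j ∈ range (m + 1), c j * (k : ℚ) ^ (m + j) := by
      intro k _
      have hsub : ((n : ℚ) - (k : ℚ)) ^ m = ((-(k : ℚ)) + (n : ℚ)) ^ m := by ring_nf
      rw [hsub, add_pow, Finset.mul_sum]
      refine Finset.sum_congr rfl fun j hj => ?_
      rw [neg_pow, pow_add]
      simp only [hc]
      ring
    rw [Finset.sum_congr rfl h1, Finset.sum_comm]
    exact Finset.sum_congr rfl fun j _ => (Finset.mul_sum _ _ _).symm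
  -- Step 2: Faulhaber + extension of inner sum
  have hpow : ∀ j ∈ range (m + 1), c j * ∑ k ∈ range n, (k : ℚ) ^ (m + j)
      = c j * ((∑ i ∈ range (2 * m + 2), G j i) - G j (m + j + 1)) := by
    intro j hj
    rw [mem_range] at hj
    congr 1
    rw [sum_range_pow n (m + j)]
    have e : ∀ i ∈ range (m + j + 1),
        bernoulli i * (((m + j) + 1).choose i : ℚ) * (n : ℚ) ^ ((m + j) + 1 - i)
          / ((((m + j) : ℕ) : ℚ) + 1) = G j i := by
      intro i _
      simp only [hG]
      push_cast
      ring
    rw [Finset.sum_congr rfl e]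
    have e2 : ∑ i ∈ range (2 * m + 2), G j i = ∑ i ∈ range (m + j + 2), G j i := by
      symm
      apply Finset.sum_subset (by exact Finset.range_subset_range.mpr (by omega))
      intro i _ hi
      rw [mem_range, not_lt] at hi
      have hz : (m + j + 1).choose i = 0 := Nat.choose_eq_zero_of_lt (by omega)
      simp [hG, hz]
    rw [e2, show m + j + 2 = (m + j + 1) + 1 from rfl,
      Finset.sum_range_succ (G j) (m + j + 1)]
    ring
  rw [h2, Finset.sum_congr rfl hpow]
  have hsplit : ∑ j ∈ range (m + 1), c j * ((∑ i ∈ range (2 * m + 2), G j i) - G j (m + j + 1))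
      = (∑ i ∈ range (2 * m + 2), ∑ j ∈ range (m + 1), c j * G j i)
        - ∑ j ∈ range (m + 1), c j * G j (m + j + 1) := by
    rw [Finset.sum_comm]
    rw [← Finset.sum_sub_distrib]
    refine Finset.sum_congr rfl fun j _ => ?_
    rw [mul_sub, Finset.mul_sum]
  rw [hsplit]
  -- Step 3: evaluate the i = 0 column
  have hP0 : ∑ j ∈ range (m + 1), c j * G j 0
      = (n : ℚ) ^ (2 * m + 1) / ((2 * m + 1) * ((2 * m).choose m)) := by
    have e : ∀ j ∈ range (m + 1), c j * G j 0
        = (n : ℚ) ^ (2 * m + 1) * ((-1 : ℚ) ^ j * (m.choose j) / ((m : ℚ) + j + 1)) := by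
      intro j hj
      rw [mem_range] at hj
      simp only [hG, hc, bernoulli_zero, Nat.choose_zero_right, Nat.cast_one, one_mul,
        mul_one]
      rw [Nat.sub_zero, show (n : ℚ) ^ (2 * m + 1) = (n : ℚ) ^ (m - j) * (n : ℚ) ^ (m + j + 1) by
        rw [← pow_add]; congr 1; omega]
      ring
    rw [Finset.sum_congr rfl e, ← Finset.mul_sum, betaF m m]
    rw [show m + m = 2 * m by ring]
    ring
  -- Step 4: evaluate the i ≥ 1 columns
  have hPi : ∀ i, 1 ≤ i → ∑ j ∈ range (m + 1), c j * G j i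
      = bernoulli i * (n : ℚ) ^ (2 * m + 1 - i) / i
          * ((-1 : ℚ) ^ m * (if m + 1 ≤ i then ((m.choose (i - m - 1)) : ℚ) else 0)) := by
    intro i hi
    have key : ∀ j ∈ range (m + 1), c j * G j i
        = (bernoulli i * (n : ℚ) ^ (2 * m + 1 - i) / i)
            * ((-1 : ℚ) ^ j * (m.choose j) * (((m + j).choose (i - 1) : ℕ) : ℚ)) := by
      intro j hj
      rw [mem_range] at hj
      rcases le_or_gt i (m + j + 1) with hle | hlt
      · have hch : (((m + j + 1).choose i : ℕ) : ℚ) * i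
            = ((m : ℚ) + j + 1) * (((m + j).choose (i - 1) : ℕ) : ℚ) := by
          have h2' := Nat.add_one_mul_choose_eq (m + j) (i - 1)
          have h3' : (m + j + 1) * ((m + j).choose (i - 1)) = ((m + j + 1).choose i) * i := by
            have hi1 : i - 1 + 1 = i := by omega
            simpa [Nat.succ_eq_add_one, hi1] using h2'
          exact_mod_cast by
            have := congrArg (fun x : ℕ => (x : ℚ)) h3'
            push_cast at this
            linarith [this]
        have hexp : (n : ℚ) ^ (m - j) * (n : ℚ) ^ (m + j + 1 - i) = (n : ℚ) ^ (2 * m + 1 - i) := by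
          rw [← pow_add]; congr 1; omega
        simp only [hG, hc]
        have hi' : (i : ℚ) ≠ 0 := Nat.cast_ne_zero.mpr (by omega)
        have hd : ((m : ℚ) + j + 1) ≠ 0 := by positivity
        field_simp
        rw [← hexp]
        linear_combination (bernoulli i * (m.choose j) * (n : ℚ) ^ (m - j)
          * (n : ℚ) ^ (m + j + 1 - i)) * hch
      · have hc1 : (m + j + 1).choose i = 0 := Nat.choose_eq_zero_of_lt (by omega)
        have hc2 : (m + j).choose (i - 1) = 0 := Nat.choose_eq_zero_of_lt (by omega)
        simp [hG, hc1, hc2]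
    rw [Finset.sum_congr rfl key, ← Finset.mul_sum, altG m (i - 1)]
    congr 2
    · simp [show (m ≤ i - 1) ↔ (m + 1 ≤ i) by omega, show i - 1 - m = i - m - 1 by omega]
  -- Step 5: sum over i
  have hsum_i : ∑ i ∈ range (2 * m + 2), ∑ j ∈ range (m + 1), c j * G j i
      = (n : ℚ) ^ (2 * m + 1) / ((2 * m + 1) * ((2 * m).choose m))
        + ∑ k ∈ range (m + 1),
            (-1 : ℚ) ^ m * (m.choose k) * bernoulli (m + k + 1) * (n : ℚ) ^ (m - k)
              / ((m : ℚ) + k + 1) := by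
    rw [Finset.sum_range_succ' (fun i => ∑ j ∈ range (m + 1), c j * G j i) (2 * m + 1)]
    rw [hP0]
    rw [Finset.sum_congr rfl (fun t ht => hPi (t + 1) (by omega))]
    rw [add_comm]
    congr 1
    rw [show range (2 * m + 1) = Ico 0 (2 * m + 1) by rw [Finset.range_eq_Ico],
      ← Finset.sum_Ico_consecutive _ (Nat.zero_le m) (by omega : m ≤ 2 * m + 1)]
    have hzero : ∑ t ∈ Ico 0 m,
        bernoulli (t + 1) * (n : ℚ) ^ (2 * m + 1 - (t + 1)) / (↑(t + 1))
          * ((-1 : ℚ) ^ m * (if m + 1 ≤ t + 1 then ((m.choose (t + 1 - m - 1)) : ℚ) else 0)) = 0 := by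
      apply Finset.sum_eq_zero
      intro t ht
      rw [mem_Ico] at ht
      rw [if_neg (by omega)]
      ring
    rw [hzero, zero_add, Finset.sum_Ico_eq_sum_range,
      show 2 * m + 1 - m = m + 1 by omega]
    refine Finset.sum_congr rfl fun k hk => ?_
    rw [mem_range] at hk
    rw [if_pos (by omega)]
    rw [show m + k + 1 - m - 1 = k by omega, show 2 * m + 1 - (m + k + 1) = m - k by omega]
    push_cast
    ring
  rw [hsum_i]
  -- Step 6: the correction sum
  have hcorr : ∑ j ∈ range (m + 1), c j * G j (m + j + 1)
      = ∑ j ∈ range (m + 1),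
          (-1 : ℚ) ^ j * (m.choose j) * bernoulli (m + j + 1) * (n : ℚ) ^ (m - j)
            / ((m : ℚ) + j + 1) := by
    refine Finset.sum_congr rfl fun j _ => ?_
    simp only [hG, hc, Nat.choose_self, Nat.sub_self, pow_zero, Nat.cast_one]
    ring
  rw [hcorr]
  -- Step 7: final parity bookkeeping
  have hfin : ∑ k ∈ range (m + 1),
      ((-1 : ℚ) ^ m * (m.choose k) * bernoulli (m + k + 1) * (n : ℚ) ^ (m - k) / ((m : ℚ) + k + 1)
        + 2 * ((m.choose k : ℚ) * ((-1) ^ k * bernoulli (m + k + 1) / ((m : ℚ) + k + 1))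
            * (n : ℚ) ^ (m - k))
        - (-1 : ℚ) ^ k * (m.choose k) * bernoulli (m + k + 1) * (n : ℚ) ^ (m - k)
            / ((m : ℚ) + k + 1)) = 0 := by
    apply Finset.sum_eq_zero
    intro k _
    rcases Nat.even_or_odd (m + k) with he | ho
    · rw [bern_zero he (by omega)]
      ring
    · have h1 : (-1 : ℚ) ^ (m + k) = -1 := Odd.neg_one_pow ho
      have h2 : (-1 : ℚ) ^ k * (-1 : ℚ) ^ k = 1 := by
        rw [← pow_add]
        exact Even.neg_one_pow ⟨k, rfl⟩
      have hpow2 : (-1 : ℚ) ^ m = -(-1 : ℚ) ^ k := by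
        calc (-1 : ℚ) ^ m = (-1 : ℚ) ^ m * ((-1 : ℚ) ^ k * (-1 : ℚ) ^ k) := by rw [h2, mul_one]
          _ = ((-1 : ℚ) ^ (m + k)) * (-1 : ℚ) ^ k := by rw [pow_add]; ring
          _ = -(-1 : ℚ) ^ k := by rw [h1]; ring
      rw [hpow2]
      ring
  rw [Finset.sum_sub_distrib, Finset.sum_add_distrib, ← Finset.mul_sum] at hfin
  linarith [hfin]

theorem stmt_3 (m n : ℕ) (hm : 0 < m) (hn : 2 ≤ n) :
    ∑ k ∈ Finset.Icc 1 (n - 1), (k : ℂ) ^ m * ((n : ℂ) - (k : ℂ)) ^ m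
      = (n : ℂ) ^ (2 * m + 1) / ((2 * m + 1) * ((2 * m).choose m)) -
        2 * (-1) ^ m *
          ∑ k ∈ Finset.range (m + 1),
            (m.choose k : ℂ) * riemannZeta (-(m : ℂ) - (k : ℂ)) * (n : ℂ) ^ (m - k) := by
  have hmaster := master m n hm
  have hC := congrArg (fun q : ℚ => (q : ℂ)) hmaster
  push_cast at hC
  have hI : ∑ k ∈ Finset.Icc 1 (n - 1), (k : ℂ) ^ m * ((n : ℂ) - (k : ℂ)) ^ m
      = ∑ k ∈ range n, (k : ℂ) ^ m * ((n : ℂ) - (k : ℂ)) ^ m := by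
    rw [show Finset.Icc 1 (n - 1) = Finset.Ico 1 n by
      rw [← Finset.Ico_add_one_right_eq_Icc]; congr 1; omega]
    rw [Finset.range_eq_Ico, Finset.sum_eq_sum_Ico_succ_bot (by omega : 0 < n)]
    simp [zero_pow hm.ne']
  rw [hI]
  have hz2 : 2 * (-1 : ℂ) ^ m * ∑ k ∈ Finset.range (m + 1),
        (m.choose k : ℂ) * riemannZeta (-(m : ℂ) - (k : ℂ)) * (n : ℂ) ^ (m - k)
      = 2 * ∑ k ∈ Finset.range (m + 1),
          (m.choose k : ℂ) * ((-1) ^ k * ((bernoulli (m + k + 1) : ℚ) : ℂ)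
            / ((m : ℂ) + (k : ℂ) + 1)) * (n : ℂ) ^ (m - k) := by
    rw [mul_assoc, Finset.mul_sum]
    congr 1
    refine Finset.sum_congr rfl fun k hk => ?_
    rw [show (-(m : ℂ) - (k : ℂ)) = -(((m + k : ℕ) : ℕ) : ℂ) by push_cast; ring,
      riemannZeta_neg_nat_eq_bernoulli]
    push_cast
    have hsgn : (-1 : ℂ) ^ m * (-1 : ℂ) ^ (m + k) = (-1 : ℂ) ^ k := by
      rw [← pow_add, show m + (m + k) = k + 2 * m by omega, pow_add, pow_mul]
      norm_num
    have hd : ((m : ℂ) + (k : ℂ) + 1) ≠ 0 := by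
      have h0 : ((m + k + 1 : ℕ) : ℂ) ≠ 0 := Nat.cast_ne_zero.mpr (by omega)
      push_cast at h0
      exact h0
    field_simp
    linear_combination ((m.choose k : ℂ) * ((bernoulli (m + k + 1) : ℚ) : ℂ)
      * (n : ℂ) ^ (m - k)) * hsgn
  rw [hz2]
  exact hC
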